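/- Let r < n/2 and let 𝒜 be a pairwise intersecting family of r-element subsets of {1,...,n} with |𝒜| = C(n-1, r-1). Then there exists an element x such that 𝒜 consists exactly of all r-element subsets of {1,...,n} containing x. -/

import Mathlib

open Finset

namespace EKRU

variable {n : ℕ}

/-- interval of `r` consecutive positions starting at `i` (cyclically). -/
def Ik (r : ℕ) (i : ZMod n) : Finset (ZMod n) := (range r).image (fun j : ℕ => i + (j : ZMod n))

lemma mem_Ik {r : ℕ} {i p : ZMod n} : p ∈ Ik r i ↔ ∃ j < r, i + (j : ZMod n) = p := by
  simp [Ik, mem_image, mem_range]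

lemma mem_Ik_nat [NeZero n] {r a : ℕ} (ha : a + r ≤ n) {p : ZMod n} :
    p ∈ Ik r ((a : ℕ) : ZMod n) ↔ a ≤ p.val ∧ p.val < a + r := by
  rw [mem_Ik]
  constructor
  · rintro ⟨j, hj, rfl⟩
    rw [← Nat.cast_add, ZMod.val_cast_of_lt (by omega)]
    omega
  · rintro ⟨h1, h2⟩
    refine ⟨p.val - a, by omega, ?_⟩
    rw [← Nat.cast_add]
    have : a + (p.val - a) = p.val := by omega
    rw [this, ZMod.natCast_rightInverse p]

lemma self_mem_Ik {r : ℕ} (hr : 0 < r) (i : ZMod n) : i ∈ Ik r i := by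
  rw [mem_Ik]; exact ⟨0, hr, by simp⟩

lemma card_Ik [NeZero n] {r : ℕ} (hrn : r ≤ n) (i : ZMod n) : (Ik r i).card = r := by
  rw [Ik, card_image_of_injOn, card_range]
  intro j hj j' hj' h
  simp only [mem_coe, mem_range] at hj hj'
  have : ((j : ℕ) : ZMod n) = ((j' : ℕ) : ZMod n) := by
    exact add_left_cancel h
  have := congrArg ZMod.val this
  rwa [ZMod.val_cast_of_lt (by omega), ZMod.val_cast_of_lt (by omega)] at this

section fiber

variable [NeZero n]

private lemma mem_iff_of_image {S : Finset (ZMod n)} {A : Finset (Fin n)}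
    (π : ZMod n ≃ Fin n) (hπ : S.image ⇑π = A) (z : ZMod n) : z ∈ S ↔ π z ∈ A := by
  constructor
  · intro h; rw [← hπ]; exact mem_image_of_mem _ h
  · intro h; rw [← hπ, mem_image] at h
    obtain ⟨y, hy, hyz⟩ := h
    rwa [← π.injective hyz]

private def glue (S : Finset (ZMod n)) (A : Finset (Fin n))
    (e : {x // x ∈ S} ≃ {y // y ∈ A}) (f : {x // ¬ x ∈ S} ≃ {y // ¬ y ∈ A}) :
    ZMod n ≃ Fin n :=
  (Equiv.sumCompl (· ∈ S)).symm.trans ((e.sumCongr f).trans (Equiv.sumCompl (· ∈ A)))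

private lemma glue_pos {S : Finset (ZMod n)} {A : Finset (Fin n)}
    (e : {x // x ∈ S} ≃ {y // y ∈ A}) (f : {x // ¬ x ∈ S} ≃ {y // ¬ y ∈ A})
    {z : ZMod n} (hz : z ∈ S) : glue S A e f z = ↑(e ⟨z, hz⟩) := by
  have hsymm : (Equiv.sumCompl (· ∈ S)).symm z = Sum.inl ⟨z, hz⟩ := by
    rw [Equiv.symm_apply_eq]; simp
  simp [glue, hsymm]

private lemma glue_neg {S : Finset (ZMod n)} {A : Finset (Fin n)}
    (e : {x // x ∈ S} ≃ {y // y ∈ A}) (f : {x // ¬ x ∈ S} ≃ {y // ¬ y ∈ A})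
    {z : ZMod n} (hz : ¬ z ∈ S) : glue S A e f z = ↑(f ⟨z, hz⟩) := by
  have hsymm : (Equiv.sumCompl (· ∈ S)).symm z = Sum.inr ⟨z, hz⟩ := by
    rw [Equiv.symm_apply_eq]; simp
  simp [glue, hsymm]

lemma card_fiber {r : ℕ} (hrn : r ≤ n) (S : Finset (ZMod n)) (A : Finset (Fin n))
    (hS : S.card = r) (hA : A.card = r) :
    (univ.filter (fun π : ZMod n ≃ Fin n => S.image ⇑π = A)).card
      = r.factorial * (n - r).factorial := by
  classical
  rw [← Fintype.card_subtype]
  have hglueimg : ∀ (e : {x // x ∈ S} ≃ {y // y ∈ A}) (f : {x // ¬ x ∈ S} ≃ {y // ¬ y ∈ A}),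
      S.image ⇑(glue S A e f) = A := by
    intro e f
    have hsub : S.image ⇑(glue S A e f) ⊆ A := by
      intro y hy
      rw [mem_image] at hy
      obtain ⟨z, hz, rfl⟩ := hy
      rw [glue_pos e f hz]
      exact (e ⟨z, hz⟩).2
    apply Finset.eq_of_subset_of_card_le hsub
    rw [card_image_of_injective _ (glue S A e f).injective, hS, hA]
  let E1 : {π : ZMod n ≃ Fin n // S.image ⇑π = A} ≃
      (({x // x ∈ S} ≃ {y // y ∈ A}) × ({x // ¬ x ∈ S} ≃ {y // ¬ y ∈ A})) :=
    { toFun := fun π => (Equiv.subtypeEquiv π.1 (mem_iff_of_image π.1 π.2),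
        Equiv.subtypeEquiv π.1 (fun z => not_iff_not.mpr (mem_iff_of_image π.1 π.2 z))),
      invFun := fun ef => ⟨glue S A ef.1 ef.2, hglueimg ef.1 ef.2⟩,
      left_inv := by
        rintro ⟨π, hπ⟩
        apply Subtype.ext
        apply Equiv.ext
        intro z
        by_cases hz : z ∈ S
        · rw [glue_pos _ _ hz]; rfl
        · rw [glue_neg _ _ hz]; rfl
      right_inv := by
        rintro ⟨e, f⟩
        refine Prod.ext ?_ ?_ <;> apply Equiv.ext <;> rintro ⟨z, hz⟩ <;>
          apply Subtype.ext <;> simp only [Equiv.subtypeEquiv_apply]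
        · exact glue_pos e f hz
        · exact glue_neg e f hz }
  rw [Fintype.card_congr E1, Fintype.card_prod]
  have c1 : Fintype.card {x : ZMod n // x ∈ S} = r := by
    rw [Fintype.card_coe, hS]
  have c2 : Fintype.card {y : Fin n // y ∈ A} = r := by
    rw [Fintype.card_coe, hA]
  have c3 : Fintype.card {x : ZMod n // ¬ x ∈ S} = n - r := by
    rw [Fintype.card_subtype_compl, ZMod.card, c1]
  have c4 : Fintype.card {y : Fin n // ¬ y ∈ A} = n - r := by
    rw [Fintype.card_subtype_compl, Fintype.card_fin, c2]
  rw [Fintype.card_equiv (Fintype.equivOfCardEq (by rw [c1, c2])),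
    Fintype.card_equiv (Fintype.equivOfCardEq (by rw [c3, c4])), c1, c3]

end fiber


section engine

variable [NeZero n] {r : ℕ} {𝒜 : Finset (Finset (Fin n))}

/-- The set of good starting positions for a circular arrangement `π`. -/
def GoodS (r : ℕ) (𝒜 : Finset (Finset (Fin n))) (π : ZMod n ≃ Fin n) : Finset (ZMod n) :=
  univ.filter (fun i => (Ik r i).image ⇑π ∈ 𝒜)

lemma mem_GoodS {π : ZMod n ≃ Fin n} {i : ZMod n} :
    i ∈ GoodS r 𝒜 π ↔ (Ik r i).image ⇑π ∈ 𝒜 := by simp [GoodS]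

lemma Ik_inter_of_good (hint : ∀ A ∈ 𝒜, ∀ B ∈ 𝒜, (A ∩ B).Nonempty)
    {π : ZMod n ≃ Fin n} {i i' : ZMod n} (hi : i ∈ GoodS r 𝒜 π) (hi' : i' ∈ GoodS r 𝒜 π) :
    (Ik r i ∩ Ik r i').Nonempty := by
  have h := hint _ (mem_GoodS.1 hi) _ (mem_GoodS.1 hi')
  rw [← Finset.image_inter _ _ π.injective] at h
  rwa [Finset.image_nonempty] at h

lemma Ik_disj_step (hr : 2 * r < n) (i : ZMod n) :
    ¬ (Ik r i ∩ Ik r (i + (r : ZMod n))).Nonempty := by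
  rintro ⟨z, hz⟩
  rw [mem_inter, mem_Ik, mem_Ik] at hz
  obtain ⟨⟨j, hj, hj2⟩, ⟨j', hj', hj'2⟩⟩ := hz
  rw [← hj2] at hj'2
  have : ((j : ℕ) : ZMod n) = (((r + j' : ℕ)) : ZMod n) := by
    push_cast
    linear_combination -hj'2
  have := congrArg ZMod.val this
  rw [ZMod.val_cast_of_lt (by omega), ZMod.val_cast_of_lt (by omega)] at this
  omega

lemma not_adjacent_good (hr : 2 * r < n) (hint : ∀ A ∈ 𝒜, ∀ B ∈ 𝒜, (A ∩ B).Nonempty)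
    {π : ZMod n ≃ Fin n} {i : ZMod n} (hi : i ∈ GoodS r 𝒜 π) :
    ¬ (i + (r : ZMod n)) ∈ GoodS r 𝒜 π := fun h =>
  Ik_disj_step hr i (Ik_inter_of_good hint hi h)

/-- classification of differences of good positions. -/
lemma good_diff (hr : 2 * r < n) (hint : ∀ A ∈ 𝒜, ∀ B ∈ 𝒜, (A ∩ B).Nonempty)
    {π : ZMod n ≃ Fin n} {i₀ i : ZMod n} (hi₀ : i₀ ∈ GoodS r 𝒜 π) (hi : i ∈ GoodS r 𝒜 π) :
    (∃ c < r, i = i₀ + (c : ZMod n)) ∨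
      (∃ c, 1 ≤ c ∧ c < r ∧ i = i₀ + (c : ZMod n) - (r : ZMod n)) := by
  obtain ⟨z, hz⟩ := Ik_inter_of_good hint hi hi₀
  rw [mem_inter, mem_Ik, mem_Ik] at hz
  obtain ⟨⟨j, hj, hj2⟩, ⟨j', hj', hj'2⟩⟩ := hz
  -- i + j = i₀ + j'
  rw [← hj2] at hj'2
  rcases le_or_gt j j' with hle | hlt
  · left
    refine ⟨j' - j, by omega, ?_⟩
    rw [Nat.cast_sub hle]
    linear_combination - hj'2
  · right
    refine ⟨r - (j - j'), by omega, by omega, ?_⟩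
    rw [Nat.cast_sub (by omega : j - j' ≤ r), Nat.cast_sub (by omega : j' ≤ j)]
    linear_combination - hj'2

section withbase

variable (r) (𝒜) (π : ZMod n ≃ Fin n) (i₀ : ZMod n)

/-- good positions to the "right" of `i₀`. -/
def Gs : Finset ℕ := (range r).filter (fun c => i₀ + (c : ZMod n) ∈ GoodS r 𝒜 π)

/-- good positions to the "left" of `i₀`. -/
def Gl : Finset ℕ := (Ico 1 r).filter (fun c => i₀ + (c : ZMod n) - (r : ZMod n) ∈ GoodS r 𝒜 π)

end withbase

lemma Gs_Gl_disj (hr : 2 * r < n) (hint : ∀ A ∈ 𝒜, ∀ B ∈ 𝒜, (A ∩ B).Nonempty)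
    (π : ZMod n ≃ Fin n) (i₀ : ZMod n) {c : ℕ} (hcs : c ∈ Gs r 𝒜 π i₀)
    (hcl : c ∈ Gl r 𝒜 π i₀) : False := by
  rw [Gs, mem_filter] at hcs
  rw [Gl, mem_filter] at hcl
  have := not_adjacent_good hr hint hcl.2
  rw [sub_add_cancel] at this
  exact this hcs.2

lemma good_sub_union (hr : 2 * r < n) (hint : ∀ A ∈ 𝒜, ∀ B ∈ 𝒜, (A ∩ B).Nonempty)
    (π : ZMod n ≃ Fin n) {i₀ : ZMod n} (hi₀ : i₀ ∈ GoodS r 𝒜 π) :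
    GoodS r 𝒜 π ⊆ (Gs r 𝒜 π i₀).image (fun c : ℕ => i₀ + (c : ZMod n)) ∪
      (Gl r 𝒜 π i₀).image (fun c : ℕ => i₀ + (c : ZMod n) - (r : ZMod n)) := by
  intro i hi
  rcases good_diff hr hint hi₀ hi with ⟨c, hc, rfl⟩ | ⟨c, hc1, hc2, rfl⟩
  · exact mem_union_left _ (mem_image_of_mem _ (by
      rw [Gs, mem_filter, mem_range]; exact ⟨hc, hi⟩))
  · exact mem_union_right _ (mem_image_of_mem _ (by
      rw [Gl, mem_filter, mem_Ico]; exact ⟨⟨hc1, hc2⟩, hi⟩))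

lemma katona_le (hr : 2 * r < n) (hint : ∀ A ∈ 𝒜, ∀ B ∈ 𝒜, (A ∩ B).Nonempty)
    (π : ZMod n ≃ Fin n) : (GoodS r 𝒜 π).card ≤ r := by
  rcases (GoodS r 𝒜 π).eq_empty_or_nonempty with he | ⟨i₀, hi₀⟩
  · simp [he]
  calc (GoodS r 𝒜 π).card
      ≤ ((Gs r 𝒜 π i₀).image (fun c : ℕ => i₀ + (c : ZMod n)) ∪
          (Gl r 𝒜 π i₀).image (fun c : ℕ => i₀ + (c : ZMod n) - (r : ZMod n))).card :=
        card_le_card (good_sub_union hr hint π hi₀)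
    _ ≤ (Gs r 𝒜 π i₀).card + (Gl r 𝒜 π i₀).card :=
        le_trans (card_union_le _ _) (by gcongr <;> exact card_image_le)
    _ = ((Gs r 𝒜 π i₀) ∪ (Gl r 𝒜 π i₀)).card := by
        rw [card_union_of_disjoint]
        rw [Finset.disjoint_left]
        intro c h1 h2
        exact Gs_Gl_disj hr hint π i₀ h1 h2
    _ ≤ (range r).card := by
        apply card_le_card
        intro c hc
        rcases mem_union.1 hc with h | h
        · rw [Gs, mem_filter] at h; exact h.1
        · rw [Gl, mem_filter, mem_Ico] at h; rw [mem_range]; omega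
    _ = r := card_range r

lemma sum_card_G (hr : 2 * r < n) (hr1 : 1 ≤ r)
    (hcard : ∀ A ∈ 𝒜, A.card = r)
    (hmax : 𝒜.card = (n - 1).choose (r - 1)) :
    ∑ π : ZMod n ≃ Fin n, (GoodS r 𝒜 π).card = r * n.factorial := by
  classical
  have swap : ∑ π : ZMod n ≃ Fin n, (GoodS r 𝒜 π).card
      = ∑ i : ZMod n, (univ.filter (fun π : ZMod n ≃ Fin n => (Ik r i).image ⇑π ∈ 𝒜)).card := by
    simp only [GoodS, card_filter]
    exact Finset.sum_comm
  have peri : ∀ i : ZMod n,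
      (univ.filter (fun π : ZMod n ≃ Fin n => (Ik r i).image ⇑π ∈ 𝒜)).card
        = (n - 1).choose (r - 1) * (r.factorial * (n - r).factorial) := by
    intro i
    rw [card_eq_sum_card_fiberwise (f := fun π : ZMod n ≃ Fin n => (Ik r i).image ⇑π)
      (s := univ.filter (fun π : ZMod n ≃ Fin n => (Ik r i).image ⇑π ∈ 𝒜)) (t := 𝒜) (fun π hπ => (mem_filter.1 hπ).2)]
    rw [← hmax]
    rw [Finset.sum_congr rfl (fun A hA => ?_)]
    · rw [Finset.sum_const, smul_eq_mul]
    · rw [filter_filter]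
      have : (univ.filter (fun π : ZMod n ≃ Fin n =>
          (Ik r i).image ⇑π ∈ 𝒜 ∧ (Ik r i).image ⇑π = A)).card
          = (univ.filter (fun π : ZMod n ≃ Fin n => (Ik r i).image ⇑π = A)).card := by
        congr 1
        apply filter_congr
        intro π _
        constructor
        · exact fun h => h.2
        · exact fun h => ⟨h ▸ hA, h⟩
      rw [this]
      exact card_fiber (by omega) _ _ (card_Ik (by omega) i) (hcard A hA)
  rw [swap]
  rw [Finset.sum_congr rfl (fun i _ => peri i), Finset.sum_const, smul_eq_mul, card_univ,
    ZMod.card]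
  -- arithmetic
  have key : (n - 1).choose (r - 1) * (r - 1).factorial * (n - r).factorial
      = (n - 1).factorial := by
    have := Nat.choose_mul_factorial_mul_factorial (show r - 1 ≤ n - 1 by omega)
    rwa [show n - 1 - (r - 1) = n - r by omega] at this
  have hrfac : r.factorial = r * (r - 1).factorial := by
    conv_lhs => rw [show r = (r - 1) + 1 by omega]
    rw [Nat.factorial_succ]
    congr 1
    omega
  have hnfac : n.factorial = n * (n - 1).factorial := by
    conv_lhs => rw [show n = (n - 1) + 1 by omega]
    rw [Nat.factorial_succ]
    congr 1
    omega
  rw [hrfac, hnfac, ← key]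
  ring

lemma card_G_eq (hr : 2 * r < n) (hr1 : 1 ≤ r)
    (hcard : ∀ A ∈ 𝒜, A.card = r)
    (hint : ∀ A ∈ 𝒜, ∀ B ∈ 𝒜, (A ∩ B).Nonempty)
    (hmax : 𝒜.card = (n - 1).choose (r - 1)) (π : ZMod n ≃ Fin n) :
    (GoodS r 𝒜 π).card = r := by
  classical
  by_contra hne
  have hlt : (GoodS r 𝒜 π).card < r := lt_of_le_of_ne (katona_le hr hint π) hne
  have hsum : ∑ π' : ZMod n ≃ Fin n, (GoodS r 𝒜 π').card
      < ∑ _π' : ZMod n ≃ Fin n, r := by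
    apply Finset.sum_lt_sum (fun π' _ => katona_le hr hint π')
    exact ⟨π, mem_univ π, hlt⟩
  rw [sum_card_G hr hr1 hcard hmax, Finset.sum_const, smul_eq_mul, card_univ] at hsum
  have hcards : Fintype.card (ZMod n ≃ Fin n) = n.factorial := by
    rw [Fintype.card_equiv (Fintype.equivOfCardEq (by rw [ZMod.card, Fintype.card_fin])),
      ZMod.card]
  rw [hcards, mul_comm] at hsum
  omega

/-- gap bound for "inverted pairs". -/
lemma gap_bound (hr : 2 * r < n) (hint : ∀ A ∈ 𝒜, ∀ B ∈ 𝒜, (A ∩ B).Nonempty)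
    (π : ZMod n ≃ Fin n) (i₀ : ZMod n) {c c' : ℕ}
    (hc : c ∈ Gs r 𝒜 π i₀) (hc' : c' ∈ Gl r 𝒜 π i₀) (hlt : c' < c) :
    n + c' + 1 ≤ 2 * r + c := by
  rw [Gs, mem_filter, mem_range] at hc
  rw [Gl, mem_filter, mem_Ico] at hc'
  obtain ⟨z, hz⟩ := Ik_inter_of_good hint hc.2 hc'.2
  rw [mem_inter, mem_Ik, mem_Ik] at hz
  obtain ⟨⟨j, hj, hj2⟩, ⟨j', hj', hj'2⟩⟩ := hz
  rw [← hj2] at hj'2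
  -- i₀ + c' - r + j' = i₀ + c + j, so c + j + r ≡ c' + j'  [MOD n]
  have hcast : (((c + j + r : ℕ)) : ZMod n) = (((c' + j' : ℕ)) : ZMod n) := by
    push_cast
    linear_combination - hj'2
  rw [ZMod.natCast_eq_natCast_iff] at hcast
  have hdvd : n ∣ (c + j + r) - (c' + j') :=
    (Nat.modEq_iff_dvd' (by omega)).1 hcast.symm
  have hpos : 0 < (c + j + r) - (c' + j') := by omega
  have := Nat.le_of_dvd hpos hdvd
  omega

/-- The structure of the good set in the equality case: it is a full window. -/
lemma window (hr : 2 * r < n) (hr1 : 1 ≤ r)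
    (hint : ∀ A ∈ 𝒜, ∀ B ∈ 𝒜, (A ∩ B).Nonempty)
    (π : ZMod n ≃ Fin n) (hGr : (GoodS r 𝒜 π).card = r) :
    ∃ p : ZMod n, ∀ i : ZMod n, ((Ik r i).image ⇑π ∈ 𝒜 ↔ p ∈ Ik r i) := by
  classical
  have hGne : (GoodS r 𝒜 π).Nonempty := by
    rw [← card_pos, hGr]; omega
  obtain ⟨i₀, hi₀⟩ := hGne
  -- cover and disjointness
  have hcover : Gs r 𝒜 π i₀ ∪ Gl r 𝒜 π i₀ = range r := by
    apply Finset.eq_of_subset_of_card_le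
    · intro c hc
      rcases mem_union.1 hc with h | h
      · rw [Gs, mem_filter] at h; exact h.1
      · rw [Gl, mem_filter, mem_Ico] at h; rw [mem_range]; omega
    · rw [card_range]
      calc r = (GoodS r 𝒜 π).card := hGr.symm
        _
          ≤ ((Gs r 𝒜 π i₀).image (fun c : ℕ => i₀ + (c : ZMod n)) ∪
              (Gl r 𝒜 π i₀).image (fun c : ℕ => i₀ + (c : ZMod n) - (r : ZMod n))).card :=
            card_le_card (good_sub_union hr hint π hi₀)
        _ ≤ (Gs r 𝒜 π i₀).card + (Gl r 𝒜 π i₀).card :=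
            le_trans (card_union_le _ _) (by gcongr <;> exact card_image_le)
        _ = ((Gs r 𝒜 π i₀) ∪ (Gl r 𝒜 π i₀)).card := by
            rw [card_union_of_disjoint]
            rw [Finset.disjoint_left]
            intro c h1 h2
            exact Gs_Gl_disj hr hint π i₀ h1 h2
  have hcov : ∀ c, c < r → c ∈ Gs r 𝒜 π i₀ ∨ c ∈ Gl r 𝒜 π i₀ := by
    intro c hc
    have : c ∈ Gs r 𝒜 π i₀ ∪ Gl r 𝒜 π i₀ := by rw [hcover, mem_range]; exact hc
    exact mem_union.1 this
  -- no inverted pairs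
  have hmono : ∀ c c', c ∈ Gs r 𝒜 π i₀ → c' ∈ Gl r 𝒜 π i₀ → c < c' := by
    by_contra hcon
    push_neg at hcon
    obtain ⟨c₁, c₁', hc₁, hc₁', hge⟩ := hcon
    have hne : c₁' ≠ c₁ := by
      intro h
      exact Gs_Gl_disj hr hint π i₀ hc₁ (h ▸ hc₁')
    have hP : (((Gs r 𝒜 π i₀) ×ˢ (Gl r 𝒜 π i₀)).filter
        (fun q : ℕ × ℕ => q.2 < q.1)).Nonempty := by
      refine ⟨(c₁, c₁'), ?_⟩
      rw [mem_filter, mem_product]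
      exact ⟨⟨hc₁, hc₁'⟩, by omega⟩
    obtain ⟨⟨c, c'⟩, hmem, hmin⟩ := Finset.exists_min_image _ (fun q : ℕ × ℕ => q.1 - q.2) hP
    rw [mem_filter, mem_product] at hmem
    obtain ⟨⟨hcs, hcl⟩, hlt⟩ := hmem
    simp only at hlt hcs hcl
    have hgap := gap_bound hr hint π i₀ hcs hcl hlt
    -- gap ≥ 2: consider m := c' + 1
    have hm : c' + 1 < c := by omega
    have hmr : c' + 1 < r := by
      rw [Gs, mem_filter, mem_range] at hcs
      omega
    rcases hcov (c' + 1) hmr with hms | hml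
    · have := gap_bound hr hint π i₀ hms hcl (by omega)
      omega
    · have hmem2 : ((c, c' + 1) : ℕ × ℕ) ∈ ((Gs r 𝒜 π i₀) ×ˢ (Gl r 𝒜 π i₀)).filter
          (fun q : ℕ × ℕ => q.2 < q.1) := by
        rw [mem_filter, mem_product]
        exact ⟨⟨hcs, hml⟩, by omega⟩
      have := hmin _ hmem2
      simp only at this
      omega
  -- Gs is downward closed
  have hdc : ∀ c c', c ∈ Gs r 𝒜 π i₀ → c' < c → c' ∈ Gs r 𝒜 π i₀ := by
    intro c c' hc hlt
    have hcr : c < r := by rw [Gs, mem_filter, mem_range] at hc; exact hc.1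
    rcases hcov c' (by omega) with h | h
    · exact h
    · exact absurd (hmono c c' hc h) (by omega)
  set t := (Gs r 𝒜 π i₀).card with ht
  have h0 : 0 ∈ Gs r 𝒜 π i₀ := by
    rw [Gs, mem_filter, mem_range]
    refine ⟨by omega, ?_⟩
    simpa using hi₀
  have ht1 : 1 ≤ t := card_pos.2 ⟨0, h0⟩
  have htr : t ≤ r := by
    rw [ht]
    calc (Gs r 𝒜 π i₀).card ≤ (range r).card := card_le_card (by
      intro c hc; rw [Gs, mem_filter] at hc; exact hc.1)
    _ = r := card_range r
  have hGs_iff : ∀ c, c ∈ Gs r 𝒜 π i₀ ↔ c < t := by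
    intro c
    constructor
    · intro hc
      have hsub : range (c + 1) ⊆ Gs r 𝒜 π i₀ := by
        intro y hy
        rw [mem_range] at hy
        rcases Nat.lt_succ_iff_lt_or_eq.1 hy with h | rfl
        · exact hdc c y hc h
        · exact hc
      have := card_le_card hsub
      rw [card_range] at this
      omega
    · intro hc
      by_contra hnc
      have hsub : Gs r 𝒜 π i₀ ⊆ range c := by
        intro y hy
        rw [mem_range]
        rcases lt_trichotomy y c with h | rfl | h
        · exact h
        · exact absurd hy hnc
        · exact absurd (hdc y c hy h) hnc
      have := card_le_card hsub
      rw [card_range] at this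
      omega
  -- the window point
  refine ⟨i₀ + ((t - 1 : ℕ) : ZMod n), fun i => ?_⟩
  rw [← mem_GoodS (π := π) (𝒜 := 𝒜) (r := r)]
  constructor
  · intro hi
    rcases good_diff hr hint hi₀ hi with ⟨c, hc, hic⟩ | ⟨c, hc1, hc2, hic⟩
    · have hcs : c ∈ Gs r 𝒜 π i₀ := by
        rw [Gs, mem_filter, mem_range]
        exact ⟨hc, hic ▸ hi⟩
      have hct : c < t := (hGs_iff c).1 hcs
      rw [mem_Ik]
      refine ⟨t - 1 - c, by omega, ?_⟩
      rw [hic, add_assoc, ← Nat.cast_add, show c + (t - 1 - c) = t - 1 by omega]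
    · have hcl : c ∈ Gl r 𝒜 π i₀ := by
        rw [Gl, mem_filter, mem_Ico]
        exact ⟨⟨hc1, hc2⟩, hic ▸ hi⟩
      have hct : ¬ c < t := by
        intro h
        exact Gs_Gl_disj hr hint π i₀ ((hGs_iff c).2 h) hcl
      rw [mem_Ik]
      refine ⟨t - 1 + r - c, by omega, ?_⟩
      rw [hic]
      rw [Nat.cast_sub (by omega : c ≤ t - 1 + r), Nat.cast_add]
      ring
  · intro hp
    rw [mem_Ik] at hp
    obtain ⟨j, hj, hij⟩ := hp
    have hieq : i = i₀ + ((t - 1 : ℕ) : ZMod n) - ((j : ℕ) : ZMod n) := by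
      linear_combination hij
    rcases le_or_gt j (t - 1) with hle | hgt
    · have hcs : t - 1 - j ∈ Gs r 𝒜 π i₀ := (hGs_iff _).2 (by omega)
      rw [Gs, mem_filter] at hcs
      have : i = i₀ + (((t - 1 - j : ℕ)) : ZMod n) := by
        rw [hieq, Nat.cast_sub hle]
        ring
      rw [this]
      exact hcs.2
    · have hcr : t - 1 + r - j < r := by omega
      have hct : ¬ (t - 1 + r - j) < t := by omega
      have hcl : t - 1 + r - j ∈ Gl r 𝒜 π i₀ := by
        rcases hcov _ hcr with h | h
        · exact absurd ((hGs_iff _).1 h) hct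
        · exact h
      rw [Gl, mem_filter] at hcl
      have : i = i₀ + (((t - 1 + r - j : ℕ)) : ZMod n) - ((r : ℕ) : ZMod n) := by
        rw [hieq, Nat.cast_sub (by omega : j ≤ t - 1 + r), Nat.cast_add]
        ring
      rw [this]
      exact hcl.2

/-- **Master lemma**: for every circular arrangement there is a point `p` such that
the arcs in `𝒜` are precisely the arcs through `p`. -/
lemma master (hr : 2 * r < n) (hr1 : 1 ≤ r)
    (hcard : ∀ A ∈ 𝒜, A.card = r)
    (hint : ∀ A ∈ 𝒜, ∀ B ∈ 𝒜, (A ∩ B).Nonempty)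
    (hmax : 𝒜.card = (n - 1).choose (r - 1)) (π : ZMod n ≃ Fin n) :
    ∃ p : ZMod n, ∀ i : ZMod n, ((Ik r i).image ⇑π ∈ 𝒜 ↔ p ∈ Ik r i) :=
  window hr hr1 hint π (card_G_eq hr hr1 hcard hint hmax π)

end engine

section layout

variable [NeZero n]

/-- the arrangement determined by a list of all elements. -/
noncomputable def permOfList (L : List (Fin n)) (hlen : L.length = n) (hnd : L.Nodup) : ZMod n ≃ Fin n :=
  Equiv.ofBijective (fun z => L.get ⟨z.val, by rw [hlen]; exact z.val_lt⟩)
    (by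
      rw [Fintype.bijective_iff_injective_and_card]
      constructor
      · intro z z' h
        have := List.nodup_iff_injective_get.1 hnd h
        have hvv : z.val = z'.val := congrArg Fin.val this
        exact ZMod.val_injective n hvv
      · rw [ZMod.card, Fintype.card_fin])

lemma permOfList_apply (L : List (Fin n)) (hlen : L.length = n) (hnd : L.Nodup) (z : ZMod n) :
    permOfList L hlen hnd z = L.get ⟨z.val, by rw [hlen]; exact z.val_lt⟩ := rfl

lemma arc_permOfList {r : ℕ} (L : List (Fin n)) (hlen : L.length = n) (hnd : L.Nodup)
    {a : ℕ} (ha : a + r ≤ n) :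
    (Ik r ((a : ℕ) : ZMod n)).image ⇑(permOfList L hlen hnd) = ((L.drop a).take r).toFinset := by
  ext x
  rw [mem_image]
  simp only [List.mem_toFinset]
  constructor
  · rintro ⟨z, hz, rfl⟩
    rw [mem_Ik] at hz
    obtain ⟨j, hj, rfl⟩ := hz
    rw [List.mem_iff_getElem]
    refine ⟨j, by simp [hlen]; omega, ?_⟩
    rw [List.getElem_take, List.getElem_drop, permOfList_apply]
    show _ = L.get _
    congr 1
    rw [← Nat.cast_add, ZMod.val_cast_of_lt (by omega)]
  · intro hx
    rw [List.mem_iff_getElem] at hx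
    obtain ⟨j, hjlt, hjx⟩ := hx
    have hjlt' : j < r := by
      have := hjlt
      simp only [List.length_take, List.length_drop, hlen] at this
      omega
    refine ⟨((a : ℕ) : ZMod n) + ((j : ℕ) : ZMod n), mem_Ik.2 ⟨j, hjlt', rfl⟩, ?_⟩
    rw [← hjx, List.getElem_take, List.getElem_drop, permOfList_apply]
    show L.get _ = L.get _
    apply congrArg
    apply Fin.ext
    show ((a : ZMod n) + (j : ZMod n)).val = a + j
    rw [← Nat.cast_add, ZMod.val_cast_of_lt (by omega)]

lemma slice_append {α : Type*} (l₁ l₂ l₃ : List α) :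
    ((l₁ ++ (l₂ ++ l₃)).drop l₁.length).take l₂.length = l₂ := by
  rw [List.drop_left, List.take_left]

lemma slice_append' {α : Type*} {l₁ l₂ l₃ : List α} {a b : ℕ}
    (h₁ : l₁.length = a) (h₂ : l₂.length = b) :
    ((l₁ ++ (l₂ ++ l₃)).drop a).take b = l₂ := by
  subst h₁; subst h₂; exact slice_append l₁ l₂ l₃

lemma nodup_cat {B : Finset (Fin n)} {l : List (Fin n)} (hl : l.Nodup)
    (hd : ∀ y ∈ B, y ∉ l) : (B.toList ++ l).Nodup :=
  List.nodup_append.2 ⟨B.nodup_toList, hl, fun x hx b hb hxb => hd x (Finset.mem_toList.1 hx) (hxb ▸ hb)⟩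

lemma arc_eq_blocks {r : ℕ} (L : List (Fin n)) (hlen : L.length = n) (hnd : L.Nodup)
    {a : ℕ} (ha : a + r ≤ n) (l₁ l₂ l₃ : List (Fin n)) (hL : L = l₁ ++ (l₂ ++ l₃))
    (h₁ : l₁.length = a) (h₂ : l₂.length = r) :
    (Ik r ((a : ℕ) : ZMod n)).image ⇑(permOfList L hlen hnd) = l₂.toFinset := by
  rw [arc_permOfList L hlen hnd ha, hL, slice_append' h₁ h₂]

end layout

section apps

variable [NeZero n] {r : ℕ} {𝒜 : Finset (Finset (Fin n))}

/-- **F1**: for a pair meeting exactly in `x`, every `r`-set consisting of `x` together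
with `r-1` elements of the pair's union is in `𝒜`. -/
lemma F1 (hr : 2 * r < n) (hr2 : 2 ≤ r)
    (hcard : ∀ A ∈ 𝒜, A.card = r)
    (hint : ∀ A ∈ 𝒜, ∀ B ∈ 𝒜, (A ∩ B).Nonempty)
    (hmax : 𝒜.card = (n - 1).choose (r - 1))
    {U V : Finset (Fin n)} {x : Fin n} (hU : U ∈ 𝒜) (hV : V ∈ 𝒜) (hUV : U ∩ V = {x})
    {S : Finset (Fin n)} (hS : S ⊆ (U ∪ V).erase x) (hScard : S.card = r - 1) :
    insert x S ∈ 𝒜 := by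
  classical
  have hUc : U.card = r := hcard U hU
  have hVc : V.card = r := hcard V hV
  have hxUV : x ∈ U ∩ V := by rw [hUV]; exact mem_singleton_self x
  have hxU : x ∈ U := (mem_inter.1 hxUV).1
  have hxV : x ∈ V := (mem_inter.1 hxUV).2
  have hUVe : ∀ y, y ∈ U.erase x → y ∈ V.erase x → False := by
    intro y h1 h2
    have : y ∈ U ∩ V := mem_inter.2 ⟨mem_of_mem_erase h1, mem_of_mem_erase h2⟩
    rw [hUV, mem_singleton] at this
    exact (mem_erase.1 h1).1 this
  set SV := S ∩ V with hSVdef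
  set SU := S \ V with hSUdef
  have hSVsub : SV ⊆ V.erase x := by
    intro y hy
    rw [mem_erase]
    have hyS := (mem_inter.1 hy).1
    exact ⟨(mem_erase.1 (hS hyS)).1, (mem_inter.1 hy).2⟩
  have hSUsub : SU ⊆ U.erase x := by
    intro y hy
    rw [mem_sdiff] at hy
    have := hS hy.1
    rw [mem_erase, mem_union] at this
    rw [mem_erase]
    rcases this.2 with h | h
    · exact ⟨this.1, h⟩
    · exact absurd h hy.2
  set a := SV.card with hadef
  have hacard : SV.card + SU.card = r - 1 := by
    rw [hSVdef, hSUdef, ← hScard]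
    exact Finset.card_inter_add_card_sdiff S V
  have haler : a ≤ r - 1 := by omega
  set V2 := (V.erase x) \ SV with hV2def
  set U2 := (U.erase x) \ SU with hU2def
  set J := (univ : Finset (Fin n)) \ (U ∪ V) with hJdef
  have hVe : (V.erase x).card = r - 1 := by rw [card_erase_of_mem hxV, hVc]
  have hUe : (U.erase x).card = r - 1 := by rw [card_erase_of_mem hxU, hUc]
  have hV2c : V2.card = r - 1 - a := by rw [hV2def, card_sdiff_of_subset hSVsub, hVe]
  have hU2c : U2.card = r - 1 - (r - 1 - a) := by
    rw [hU2def, card_sdiff_of_subset hSUsub, hUe]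
    omega
  have huvc : (U ∪ V).card = 2 * r - 1 := by
    have h1 := Finset.card_union_add_card_inter U V
    rw [hUV, card_singleton, hUc, hVc] at h1
    omega
  have hJc : J.card = n - (2 * r - 1) := by
    rw [hJdef, card_sdiff_of_subset (subset_univ _), card_univ, Fintype.card_fin, huvc]
  have hV2sub : V2 ⊆ V.erase x := sdiff_subset
  have hU2sub : U2 ⊆ U.erase x := sdiff_subset
  have hJno : ∀ y ∈ J, y ∉ U ∧ y ∉ V := by
    intro y hy
    rw [hJdef, mem_sdiff, mem_union] at hy
    push_neg at hy
    exact hy.2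
  -- the list
  set L := V2.toList ++ (SV.toList ++ (({x} : Finset (Fin n)).toList ++
    (SU.toList ++ (U2.toList ++ J.toList)))) with hLdef
  have hlen : L.length = n := by
    simp only [hLdef, List.length_append, Finset.length_toList, hV2c, hU2c, hJc,
      card_singleton]
    omega
  have hnd : L.Nodup := by
    refine nodup_cat (nodup_cat (nodup_cat (nodup_cat
      (nodup_cat J.nodup_toList ?_) ?_) ?_) ?_) ?_
    · -- U2 vs J
      intro y hy
      rw [Finset.mem_toList]
      intro hyJ
      exact (hJno y hyJ).1 (mem_of_mem_erase (hU2sub hy))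
    · -- SU vs U2, J
      intro y hy
      simp only [List.mem_append, Finset.mem_toList]
      push_neg
      constructor
      · rw [hU2def, mem_sdiff]
        exact fun hcon => hcon.2 hy
      · intro hyJ
        exact (hJno y hyJ).1 (mem_of_mem_erase (hSUsub hy))
    · -- x vs SU, U2, J
      intro y hy
      rw [mem_singleton] at hy
      subst hy
      simp only [List.mem_append, Finset.mem_toList]
      push_neg
      refine ⟨fun h => (mem_erase.1 (hSUsub h)).1 rfl, fun h => (mem_erase.1 (hU2sub h)).1 rfl,
        fun h => (hJno _ h).1 hxU⟩
    · -- SV vs x, SU, U2, J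
      intro y hy
      simp only [List.mem_append, Finset.mem_toList, Finset.mem_singleton]
      push_neg
      have hyV := hSVsub hy
      refine ⟨?_, ?_, ?_, ?_⟩
      · exact (mem_erase.1 hyV).1
      · exact fun h => hUVe y (hSUsub h) hyV
      · exact fun h => hUVe y (hU2sub h) hyV
      · exact fun h => (hJno y h).2 (mem_of_mem_erase hyV)
    · -- V2 vs SV, x, SU, U2, J
      intro y hy
      simp only [List.mem_append, Finset.mem_toList, Finset.mem_singleton]
      push_neg
      have hyV : y ∈ V.erase x := hV2sub hy
      refine ⟨?_, ?_, ?_, ?_, ?_⟩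
      · rw [hV2def, mem_sdiff] at hy; exact hy.2
      · exact (mem_erase.1 hyV).1
      · exact fun h => hUVe y (hSUsub h) hyV
      · exact fun h => hUVe y (hU2sub h) hyV
      · exact fun h => (hJno y h).2 (mem_of_mem_erase hyV)
  -- arcs
  set π := permOfList L hlen hnd with hπdef
  obtain ⟨p, hp⟩ := master hr (by omega) hcard hint hmax π
  have hVsplit : V2 ∪ SV = V.erase x := by
    rw [hV2def]; exact sdiff_union_of_subset hSVsub
  have hUsplit : U2 ∪ SU = U.erase x := by
    rw [hU2def]; exact sdiff_union_of_subset hSUsub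
  have hSsplit : SV ∪ SU = S := by
    rw [hSVdef, hSUdef]
    ext y
    simp only [mem_union, mem_inter, mem_sdiff]
    tauto
  have harcV : (Ik r ((0 : ℕ) : ZMod n)).image ⇑π = V := by
    rw [arc_eq_blocks L hlen hnd (a := 0) (by omega)
      [] (V2.toList ++ (SV.toList ++ (({x} : Finset (Fin n)).toList)))
      (SU.toList ++ (U2.toList ++ J.toList))
      (by simp only [hLdef, List.append_assoc, List.nil_append])
      (by simp)
      (by simp only [List.length_append, Finset.length_toList, hV2c, card_singleton]; omega)]
    simp only [List.toFinset_append, Finset.toList_toFinset]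
    rw [← union_assoc, hVsplit]
    rw [Finset.union_comm]
    rw [show ({x} : Finset (Fin n)) ∪ V.erase x = insert x (V.erase x) by
      ext y; simp [mem_insert]]
    exact insert_erase hxV
  have harcU : (Ik r (((r - 1 : ℕ)) : ZMod n)).image ⇑π = U := by
    rw [arc_eq_blocks L hlen hnd (a := r - 1) (by omega)
      (V2.toList ++ SV.toList)
      ((({x} : Finset (Fin n)).toList) ++ (SU.toList ++ U2.toList))
      J.toList
      (by simp only [hLdef, List.append_assoc])
      (by simp only [List.length_append, Finset.length_toList, hV2c]; omega)
      (by simp only [List.length_append, Finset.length_toList, hU2c, card_singleton]; omega)]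
    simp only [List.toFinset_append, Finset.toList_toFinset]
    rw [Finset.union_comm SU U2, hUsplit]
    rw [show ({x} : Finset (Fin n)) ∪ U.erase x = insert x (U.erase x) by
      ext y; simp [mem_insert]]
    exact insert_erase hxU
  have harcT : (Ik r (((r - 1 - a : ℕ)) : ZMod n)).image ⇑π = insert x S := by
    rw [arc_eq_blocks L hlen hnd (a := r - 1 - a) (by omega)
      V2.toList
      (SV.toList ++ ((({x} : Finset (Fin n)).toList) ++ SU.toList))
      (U2.toList ++ J.toList)
      (by simp only [hLdef, List.append_assoc])
      (by simp only [Finset.length_toList, hV2c])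
      (by simp only [List.length_append, Finset.length_toList, card_singleton]; omega)]
    simp only [List.toFinset_append, Finset.toList_toFinset]
    ext y
    simp only [mem_union, mem_singleton, mem_insert, ← hSsplit]
    tauto
  have h0 : p ∈ Ik r ((0 : ℕ) : ZMod n) := (hp _).1 (by rw [harcV]; exact hV)
  have h1 : p ∈ Ik r (((r - 1 : ℕ)) : ZMod n) := (hp _).1 (by rw [harcU]; exact hU)
  rw [mem_Ik_nat (by omega)] at h0
  rw [mem_Ik_nat (by omega)] at h1
  have hpval : p.val = r - 1 := by omega
  have := (hp (((r - 1 - a : ℕ)) : ZMod n)).2 (by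
    rw [mem_Ik_nat (by omega)]
    omega)
  rwa [harcT] at this

/-- **W**: a pool can absorb an outside element `w` next to `x`. -/
lemma Wlem (hr : 2 * r < n) (hr2 : 2 ≤ r)
    (hcard : ∀ A ∈ 𝒜, A.card = r)
    (hint : ∀ A ∈ 𝒜, ∀ B ∈ 𝒜, (A ∩ B).Nonempty)
    (hmax : 𝒜.card = (n - 1).choose (r - 1))
    {U V : Finset (Fin n)} {x : Fin n} (hU : U ∈ 𝒜) (hV : V ∈ 𝒜) (hUV : U ∩ V = {x})
    {w : Fin n} (hw : w ∉ U ∪ V) :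
    ∃ S₀ ⊆ (U ∪ V).erase x, S₀.card = r - 2 ∧ w ∉ S₀ ∧ insert x (insert w S₀) ∈ 𝒜 := by
  classical
  have hUc : U.card = r := hcard U hU
  have hVc : V.card = r := hcard V hV
  have hxUV : x ∈ U ∩ V := by rw [hUV]; exact mem_singleton_self x
  have hxU : x ∈ U := (mem_inter.1 hxUV).1
  have hxV : x ∈ V := (mem_inter.1 hxUV).2
  have hUVe : ∀ y, y ∈ U.erase x → y ∈ V.erase x → False := by
    intro y h1 h2
    have : y ∈ U ∩ V := mem_inter.2 ⟨mem_of_mem_erase h1, mem_of_mem_erase h2⟩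
    rw [hUV, mem_singleton] at this
    exact (mem_erase.1 h1).1 this
  have hVe : (V.erase x).card = r - 1 := by rw [card_erase_of_mem hxV, hVc]
  have hUe : (U.erase x).card = r - 1 := by rw [card_erase_of_mem hxU, hUc]
  have huvc : (U ∪ V).card = 2 * r - 1 := by
    have h1 := Finset.card_union_add_card_inter U V
    rw [hUV, card_singleton, hUc, hVc] at h1
    omega
  obtain ⟨v₁, hv₁⟩ : (V.erase x).Nonempty := by rw [← card_pos, hVe]; omega
  obtain ⟨u₀, hu₀⟩ : (U.erase x).Nonempty := by rw [← card_pos, hUe]; omega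
  set Jfull := (univ : Finset (Fin n)) \ (insert w (U ∪ V)) with hJfdef
  have hJfc : Jfull.card = n - 2 * r := by
    rw [hJfdef, card_sdiff_of_subset (subset_univ _), card_univ, Fintype.card_fin,
      card_insert_of_notMem hw, huvc]
    omega
  obtain ⟨j₁, hj₁⟩ : Jfull.Nonempty := by rw [← card_pos, hJfc]; omega
  have hJfno : ∀ y ∈ Jfull, y ∉ U ∧ y ∉ V ∧ y ≠ w := by
    intro y hy
    rw [hJfdef, mem_sdiff, mem_insert, mem_union] at hy
    push_neg at hy
    exact ⟨hy.2.2.1, hy.2.2.2, hy.2.1⟩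
  set Vrest := (V.erase x).erase v₁ with hVrdef
  set Urest := (U.erase x).erase u₀ with hUrdef
  set J2 := Jfull.erase j₁ with hJ2def
  have hVrc : Vrest.card = r - 2 := by rw [hVrdef, card_erase_of_mem hv₁, hVe]; omega
  have hUrc : Urest.card = r - 2 := by rw [hUrdef, card_erase_of_mem hu₀, hUe]; omega
  have hJ2c : J2.card = n - 2 * r - 1 := by rw [hJ2def, card_erase_of_mem hj₁, hJfc]
  have hVrsub : Vrest ⊆ V.erase x := erase_subset _ _
  have hUrsub : Urest ⊆ U.erase x := erase_subset _ _
  have hJ2sub : J2 ⊆ Jfull := erase_subset _ _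
  set L := ({v₁} : Finset (Fin n)).toList ++ (Vrest.toList ++
    (({j₁} : Finset (Fin n)).toList ++ (({u₀} : Finset (Fin n)).toList ++
    (({x} : Finset (Fin n)).toList ++ (Urest.toList ++
    (({w} : Finset (Fin n)).toList ++ J2.toList)))))) with hLdef
  have hlen : L.length = n := by
    simp only [hLdef, List.length_append, Finset.length_toList, hVrc, hUrc, hJ2c,
      card_singleton]
    omega
  have hxne : ∀ y, y ∈ U.erase x ∨ y ∈ V.erase x → y ≠ x := by
    rintro y (h | h) <;> exact (mem_erase.1 h).1
  have hwno : w ∉ U ∧ w ∉ V := by rw [mem_union] at hw; push_neg at hw; exact hw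
  have hnd : L.Nodup := by
    refine nodup_cat (nodup_cat (nodup_cat (nodup_cat (nodup_cat (nodup_cat
      (nodup_cat J2.nodup_toList ?_) ?_) ?_) ?_) ?_) ?_) ?_
    · -- w vs J2
      intro y hy
      rw [mem_singleton] at hy
      subst hy
      rw [Finset.mem_toList]
      intro h
      exact (hJfno y (hJ2sub h)).2.2 rfl
    · -- Urest vs w, J2
      intro y hy
      simp only [List.mem_append, Finset.mem_toList, Finset.mem_singleton]
      push_neg
      have hyU := hUrsub hy
      constructor
      · intro h; subst h; exact hwno.1 (mem_of_mem_erase hyU)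
      · intro h; exact (hJfno y (hJ2sub h)).1 (mem_of_mem_erase hyU)
    · -- x vs Urest, w, J2
      intro y hy
      rw [mem_singleton] at hy
      subst hy
      simp only [List.mem_append, Finset.mem_toList, Finset.mem_singleton]
      push_neg
      refine ⟨fun h => (mem_erase.1 (hUrsub h)).1 rfl, fun h => hwno.1 (h ▸ hxU),
        fun h => (hJfno _ (hJ2sub h)).1 hxU⟩
    · -- u₀ vs x, Urest, w, J2
      intro y hy
      rw [mem_singleton] at hy
      subst hy
      simp only [List.mem_append, Finset.mem_toList, Finset.mem_singleton]
      push_neg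
      refine ⟨(mem_erase.1 hu₀).1, ?_, ?_, ?_⟩
      · rw [hUrdef]
        intro h
        exact (mem_erase.1 h).1 rfl
      · intro h; subst h; exact hwno.1 (mem_of_mem_erase hu₀)
      · intro h; exact (hJfno _ (hJ2sub h)).1 (mem_of_mem_erase hu₀)
    · -- j₁ vs u₀, x, Urest, w, J2
      intro y hy
      rw [mem_singleton] at hy
      subst hy
      simp only [List.mem_append, Finset.mem_toList, Finset.mem_singleton]
      push_neg
      have h1 := hJfno y hj₁
      refine ⟨?_, ?_, ?_, ?_, ?_⟩
      · intro h; subst h; exact h1.1 (mem_of_mem_erase hu₀)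
      · intro h; subst h; exact h1.1 hxU
      · intro h; exact h1.1 (mem_of_mem_erase (hUrsub h))
      · exact h1.2.2
      · rw [hJ2def]; exact fun h => (mem_erase.1 h).1 rfl
    · -- Vrest vs j₁, u₀, x, Urest, w, J2
      intro y hy
      simp only [List.mem_append, Finset.mem_toList, Finset.mem_singleton]
      push_neg
      have hyV := hVrsub hy
      refine ⟨?_, ?_, ?_, ?_, ?_, ?_⟩
      · intro h; subst h; exact (hJfno _ hj₁).2.1 (mem_of_mem_erase hyV)
      · intro h; subst h; exact hUVe y hu₀ hyV
      · exact (mem_erase.1 hyV).1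
      · exact fun h => hUVe y (hUrsub h) hyV
      · intro h; subst h; exact hwno.2 (mem_of_mem_erase hyV)
      · intro h; exact (hJfno y (hJ2sub h)).2.1 (mem_of_mem_erase hyV)
    · -- v₁ vs all
      intro y hy
      rw [mem_singleton] at hy
      subst hy
      simp only [List.mem_append, Finset.mem_toList, Finset.mem_singleton]
      push_neg
      have hyV := hv₁
      refine ⟨?_, ?_, ?_, ?_, ?_, ?_, ?_⟩
      · rw [hVrdef]; exact fun h => (mem_erase.1 h).1 rfl
      · intro h; subst h; exact (hJfno _ hj₁).2.1 (mem_of_mem_erase hyV)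
      · intro h; subst h; exact hUVe y hu₀ hyV
      · exact (mem_erase.1 hyV).1
      · exact fun h => hUVe y (hUrsub h) hyV
      · intro h; subst h; exact hwno.2 (mem_of_mem_erase hyV)
      · intro h; exact (hJfno y (hJ2sub h)).2.1 (mem_of_mem_erase hyV)
  set π := permOfList L hlen hnd with hπdef
  obtain ⟨p, hp⟩ := master hr (by omega) hcard hint hmax π
  have hUsplit : ({u₀} : Finset (Fin n)) ∪ ({x} ∪ Urest) = U := by
    ext y
    simp only [mem_union, mem_singleton, hUrdef, mem_erase]
    constructor
    · rintro (rfl | rfl | h)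
      · exact mem_of_mem_erase hu₀
      · exact hxU
      · exact h.2.2
    · intro hyU
      by_cases h1 : y = u₀
      · left; exact h1
      · by_cases h2 : y = x
        · right; left; exact h2
        · right; right; exact ⟨h1, h2, hyU⟩
  have harcU : (Ik r ((r : ℕ) : ZMod n)).image ⇑π = U := by
    rw [arc_eq_blocks L hlen hnd (a := r) (by omega)
      (({v₁} : Finset (Fin n)).toList ++ (Vrest.toList ++ ({j₁} : Finset (Fin n)).toList))
      (({u₀} : Finset (Fin n)).toList ++ (({x} : Finset (Fin n)).toList ++ Urest.toList))
      (({w} : Finset (Fin n)).toList ++ J2.toList)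
      (by simp only [hLdef, List.append_assoc])
      (by simp only [List.length_append, Finset.length_toList, hVrc, card_singleton]; omega)
      (by simp only [List.length_append, Finset.length_toList, hUrc, card_singleton]; omega)]
    simp only [List.toFinset_append, Finset.toList_toFinset]
    exact hUsplit
  have harcW : (Ik r (((r + 1 : ℕ)) : ZMod n)).image ⇑π = insert x (insert w Urest) := by
    rw [arc_eq_blocks L hlen hnd (a := r + 1) (by omega)
      (({v₁} : Finset (Fin n)).toList ++ (Vrest.toList ++
        (({j₁} : Finset (Fin n)).toList ++ ({u₀} : Finset (Fin n)).toList)))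
      (({x} : Finset (Fin n)).toList ++ (Urest.toList ++ ({w} : Finset (Fin n)).toList))
      J2.toList
      (by simp only [hLdef, List.append_assoc])
      (by simp only [List.length_append, Finset.length_toList, hVrc, card_singleton]; omega)
      (by simp only [List.length_append, Finset.length_toList, hUrc, card_singleton]; omega)]
    simp only [List.toFinset_append, Finset.toList_toFinset]
    ext y
    simp only [mem_union, mem_singleton, mem_insert]
    tauto
  have harcZ : (Ik r ((1 : ℕ) : ZMod n)).image ⇑π
      = Vrest ∪ ({j₁} ∪ {u₀}) := by
    rw [arc_eq_blocks L hlen hnd (a := 1) (by omega)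
      (({v₁} : Finset (Fin n)).toList)
      (Vrest.toList ++ (({j₁} : Finset (Fin n)).toList ++ ({u₀} : Finset (Fin n)).toList))
      (({x} : Finset (Fin n)).toList ++ (Urest.toList ++
        (({w} : Finset (Fin n)).toList ++ J2.toList)))
      (by simp only [hLdef, List.append_assoc])
      (by simp only [Finset.length_toList, card_singleton])
      (by simp only [List.length_append, Finset.length_toList, hVrc, card_singleton]; omega)]
    simp only [List.toFinset_append, Finset.toList_toFinset]
  have hpU : p ∈ Ik r ((r : ℕ) : ZMod n) := (hp _).1 (by rw [harcU]; exact hU)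
  rw [mem_Ik_nat (by omega)] at hpU
  rcases Nat.lt_or_ge p.val (r + 1) with hcase | hcase
  · -- p.val = r : contradiction via Z
    exfalso
    have hZ : Vrest ∪ ({j₁} ∪ {u₀}) ∈ 𝒜 := by
      rw [← harcZ]
      exact (hp _).2 (by rw [mem_Ik_nat (by omega)]; omega)
    set D := Vrest ∪ {u₀} with hDdef
    have hDsub : D ⊆ (U ∪ V).erase x := by
      intro y hy
      rw [hDdef, mem_union, mem_singleton] at hy
      rw [mem_erase, mem_union]
      rcases hy with h | rfl
      · have := hVrsub h
        exact ⟨(mem_erase.1 this).1, Or.inr (mem_of_mem_erase this)⟩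
      · exact ⟨(mem_erase.1 hu₀).1, Or.inl (mem_of_mem_erase hu₀)⟩
    have hDc : D.card = r - 1 := by
      rw [hDdef, card_union_of_disjoint, hVrc, card_singleton]
      · omega
      · rw [Finset.disjoint_singleton_right]
        intro h
        exact hUVe u₀ hu₀ (hVrsub h)
    have hec : ((U ∪ V).erase x).card = 2 * r - 2 := by
      rw [card_erase_of_mem (mem_union.2 (Or.inl hxU)), huvc]
      omega
    set Sstar := ((U ∪ V).erase x) \ D with hSsdef
    have hSsc : Sstar.card = r - 1 := by
      rw [hSsdef, card_sdiff_of_subset hDsub, hec, hDc]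
      omega
    have hxS : insert x Sstar ∈ 𝒜 :=
      F1 hr hr2 hcard hint hmax hU hV hUV (by rw [hSsdef]; exact sdiff_subset) hSsc
    obtain ⟨y, hy⟩ := hint _ hZ _ hxS
    rw [mem_inter, mem_union, mem_union, mem_singleton, mem_singleton, mem_insert] at hy
    obtain ⟨hy1, hy2⟩ := hy
    rcases hy2 with rfl | hy2
    · rcases hy1 with h | h | h
      · exact (mem_erase.1 (hVrsub h)).1 rfl
      · exact (hJfno _ hj₁).1 (h ▸ hxU)
      · exact (mem_erase.1 hu₀).1 h.symm
    · rw [hSsdef, mem_sdiff, hDdef, mem_union, mem_singleton] at hy2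
      rcases hy1 with h | h | h
      · exact hy2.2 (Or.inl h)
      · subst h
        exact (hJfno _ hj₁).1 ((mem_union.1 (mem_of_mem_erase hy2.1)).resolve_right
          (hJfno _ hj₁).2.1)
      · exact hy2.2 (Or.inr h)
  · -- p.val ≥ r + 1 : the W-set is an arc through p
    refine ⟨Urest, ?_, hUrc, ?_, ?_⟩
    · intro y hy
      have := hUrsub hy
      rw [mem_erase, mem_union]
      exact ⟨(mem_erase.1 this).1, Or.inl (mem_of_mem_erase this)⟩
    · intro h
      exact hwno.1 (mem_of_mem_erase (hUrsub h))
    · rw [← harcW]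
      exact (hp _).2 (by rw [mem_Ik_nat (by omega)]; omega)

/-- key step for L1: from a pair with intersection size `m ≥ 2` produce a pair with
smaller intersection. -/
lemma pair_descent (hr : 2 * r < n) (hr2 : 2 ≤ r)
    (hcard : ∀ A ∈ 𝒜, A.card = r)
    (hint : ∀ A ∈ 𝒜, ∀ B ∈ 𝒜, (A ∩ B).Nonempty)
    (hmax : 𝒜.card = (n - 1).choose (r - 1))
    {A B : Finset (Fin n)} {m : ℕ} (hA : A ∈ 𝒜) (hB : B ∈ 𝒜)
    (hm : (A ∩ B).card = m) (hm2 : 2 ≤ m) :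
    ∃ A' B' m', A' ∈ 𝒜 ∧ B' ∈ 𝒜 ∧ (A' ∩ B').card = m' ∧ 1 ≤ m' ∧ m' < m := by
  classical
  have hAc : A.card = r := hcard A hA
  have hBc : B.card = r := hcard B hB
  have hmr : m ≤ r := by
    rw [← hm, ← hAc]
    exact card_le_card inter_subset_left
  have hABc : (A \ B).card = r - m := by
    have := Finset.card_sdiff_add_card_inter A B
    omega
  have hBAc : (B \ A).card = r - m := by
    have := Finset.card_sdiff_add_card_inter B A
    rw [Finset.inter_comm] at this
    omega
  have huv : (A ∪ B).card = 2 * r - m := by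
    have := Finset.card_union_add_card_inter A B
    omega
  set T := (univ : Finset (Fin n)) \ (A ∪ B) with hTdef
  have hTc : T.card = n - (2 * r - m) := by
    rw [hTdef, card_sdiff_of_subset (subset_univ _), card_univ, Fintype.card_fin, huv]
  have hTno : ∀ y ∈ T, y ∉ A ∧ y ∉ B := by
    intro y hy
    rw [hTdef, mem_sdiff, mem_union] at hy
    push_neg at hy
    exact hy.2
  obtain ⟨J1, hJ1sub, hJ1c⟩ := Finset.exists_subset_card_eq
    (show m - 1 ≤ T.card by rw [hTc]; omega) (s := T)
  set J2 := T \ J1 with hJ2def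
  have hJ2c : J2.card = n - 2 * r + 1 := by
    rw [hJ2def, card_sdiff_of_subset hJ1sub, hTc, hJ1c]
    omega
  obtain ⟨b₁, hb₁⟩ : (A ∩ B).Nonempty := by rw [← card_pos, hm]; omega
  set ABr := (A ∩ B).erase b₁ with hABrdef
  have hABrc : ABr.card = m - 1 := by rw [hABrdef, card_erase_of_mem hb₁, hm]
  have hJ12 : ∀ y ∈ J1, y ∉ A ∧ y ∉ B := fun y hy => hTno y (hJ1sub hy)
  have hJ22 : ∀ y ∈ J2, y ∉ A ∧ y ∉ B := fun y hy => hTno y (sdiff_subset hy)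
  set L := J2.toList ++ (J1.toList ++ ((A \ B).toList ++
    (({b₁} : Finset (Fin n)).toList ++ (ABr.toList ++ (B \ A).toList)))) with hLdef
  have hlen : L.length = n := by
    simp only [hLdef, List.length_append, Finset.length_toList, hJ2c, hJ1c, hABc, hABrc,
      hBAc, card_singleton]
    omega
  have hnd : L.Nodup := by
    refine nodup_cat (nodup_cat (nodup_cat (nodup_cat
      (nodup_cat (B \ A).nodup_toList ?_) ?_) ?_) ?_) ?_
    · -- ABr vs BA
      intro y hy
      rw [Finset.mem_toList, mem_sdiff]
      have : y ∈ A := (mem_inter.1 (mem_of_mem_erase hy)).1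
      tauto
    · -- b₁ vs ABr, BA
      intro y hy
      rw [mem_singleton] at hy
      subst hy
      simp only [List.mem_append, Finset.mem_toList]
      push_neg
      constructor
      · rw [hABrdef]; exact fun h => (mem_erase.1 h).1 rfl
      · rw [mem_sdiff]
        have : y ∈ A := (mem_inter.1 hb₁).1
        tauto
    · -- A\B vs b₁, ABr, BA
      intro y hy
      simp only [List.mem_append, Finset.mem_toList, Finset.mem_singleton]
      push_neg
      rw [mem_sdiff] at hy
      refine ⟨?_, ?_, ?_⟩
      · intro h; subst h; exact hy.2 (mem_inter.1 hb₁).2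
      · intro h; exact hy.2 (mem_inter.1 (mem_of_mem_erase h)).2
      · rw [mem_sdiff]; tauto
    · -- J1 vs A\B, b₁, ABr, BA
      intro y hy
      simp only [List.mem_append, Finset.mem_toList, Finset.mem_singleton]
      push_neg
      have h := hJ12 y hy
      refine ⟨?_, ?_, ?_, ?_⟩
      · rw [mem_sdiff]; tauto
      · intro hc; subst hc; exact h.1 (mem_inter.1 hb₁).1
      · intro hc; exact h.1 (mem_inter.1 (mem_of_mem_erase hc)).1
      · rw [mem_sdiff]; tauto
    · -- J2 vs J1, A\B, b₁, ABr, BA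
      intro y hy
      simp only [List.mem_append, Finset.mem_toList, Finset.mem_singleton]
      push_neg
      have h := hJ22 y hy
      refine ⟨?_, ?_, ?_, ?_, ?_⟩
      · rw [hJ2def, mem_sdiff] at hy; exact hy.2
      · rw [mem_sdiff]; tauto
      · intro hc; subst hc; exact h.1 (mem_inter.1 hb₁).1
      · intro hc; exact h.1 (mem_inter.1 (mem_of_mem_erase hc)).1
      · rw [mem_sdiff]; tauto
  set π := permOfList L hlen hnd with hπdef
  obtain ⟨p, hp⟩ := master hr (by omega) hcard hint hmax π
  set β := n - 2 * r + m with hβdef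
  have harcA : (Ik r ((β : ℕ) : ZMod n)).image ⇑π = A := by
    rw [arc_eq_blocks L hlen hnd (a := β) (by omega)
      (J2.toList ++ J1.toList)
      ((A \ B).toList ++ (({b₁} : Finset (Fin n)).toList ++ ABr.toList))
      ((B \ A).toList)
      (by simp only [hLdef, List.append_assoc])
      (by simp only [List.length_append, Finset.length_toList, hJ2c, hJ1c]; omega)
      (by simp only [List.length_append, Finset.length_toList, hABc, hABrc,
        card_singleton]; omega)]
    simp only [List.toFinset_append, Finset.toList_toFinset]
    ext y
    simp only [mem_union, mem_singleton, mem_sdiff, hABrdef, mem_erase, mem_inter]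
    by_cases hybB : y ∈ A <;> by_cases hyb : y = b₁ <;>
      first
      | (subst hyb; simp_all [mem_inter.1 hb₁])
      | tauto
  have harcB : (Ik r (((β + r - m : ℕ)) : ZMod n)).image ⇑π = B := by
    rw [arc_eq_blocks L hlen hnd (a := β + r - m) (by omega)
      (J2.toList ++ (J1.toList ++ (A \ B).toList))
      ((({b₁} : Finset (Fin n)).toList ++ (ABr.toList ++ (B \ A).toList)))
      ([] : List (Fin n))
      (by simp only [hLdef, List.append_assoc, List.append_nil])
      (by simp only [List.length_append, Finset.length_toList, hJ2c, hJ1c, hABc]; omega)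
      (by simp only [List.length_append, Finset.length_toList, hABrc, hBAc,
        card_singleton]; omega)]
    simp only [List.toFinset_append, Finset.toList_toFinset]
    ext y
    simp only [mem_union, mem_singleton, mem_sdiff, hABrdef, mem_erase, mem_inter]
    by_cases hybB : y ∈ B <;> by_cases hyb : y = b₁ <;>
      first
      | (subst hyb; simp_all [mem_inter.1 hb₁])
      | tauto
  have harcZ : (Ik r (((β - m + 1 : ℕ)) : ZMod n)).image ⇑π
      = J1 ∪ ((A \ B) ∪ {b₁}) := by
    rw [arc_eq_blocks L hlen hnd (a := β - m + 1) (by omega)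
      (J2.toList)
      (J1.toList ++ ((A \ B).toList ++ ({b₁} : Finset (Fin n)).toList))
      (ABr.toList ++ (B \ A).toList)
      (by simp only [hLdef, List.append_assoc])
      (by simp only [Finset.length_toList, hJ2c]; omega)
      (by simp only [List.length_append, Finset.length_toList, hJ1c, hABc,
        card_singleton]; omega)]
    simp only [List.toFinset_append, Finset.toList_toFinset]
  have hpA : p ∈ Ik r ((β : ℕ) : ZMod n) := (hp _).1 (by rw [harcA]; exact hA)
  have hpB : p ∈ Ik r (((β + r - m : ℕ)) : ZMod n) := (hp _).1 (by rw [harcB]; exact hB)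
  rw [mem_Ik_nat (by omega)] at hpA
  rw [mem_Ik_nat (by omega)] at hpB
  rcases Nat.lt_or_ge (β + r - m) p.val with hcase | hcase
  · -- descent arc starting at p
    have hq : ((p.val : ℕ) : ZMod n) = p := ZMod.natCast_rightInverse p
    have hZmem : (Ik r p).image ⇑π ∈ 𝒜 := (hp p).2 (self_mem_Ik (by omega) p)
    have hZA : (Ik r p).image ⇑π ∩ A = ((Ik r p ∩ Ik r ((β : ℕ) : ZMod n))).image ⇑π := by
      rw [← harcA, Finset.image_inter _ _ π.injective]
    have hsub : Ik r p ∩ Ik r ((β : ℕ) : ZMod n) ⊆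
        (range (β + r - p.val)).image (fun j : ℕ => (((p.val + j : ℕ)) : ZMod n)) := by
      intro z hz
      rw [mem_inter] at hz
      obtain ⟨hz1, hz2⟩ := hz
      rw [mem_Ik_nat (by omega)] at hz2
      have hzval : p.val ≤ z.val := by
        rw [← hq, mem_Ik] at hz1
        obtain ⟨j, hj, hzj⟩ := hz1
        rw [← Nat.cast_add] at hzj
        have : z.val = (p.val + j) % n := by rw [← hzj, ZMod.val_natCast]
        rcases Nat.lt_or_ge (p.val + j) n with h | h
        · rw [Nat.mod_eq_of_lt h] at this; omega
        · exfalso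
          have h2 : (p.val + j) % n = p.val + j - n := by
            rw [Nat.mod_eq_sub_mod h, Nat.mod_eq_of_lt (by omega)]
          rw [h2] at this
          omega
      rw [mem_image]
      refine ⟨z.val - p.val, by rw [mem_range]; omega, ?_⟩
      rw [show p.val + (z.val - p.val) = z.val by omega]
      exact ZMod.natCast_rightInverse z
    have hcard1 : 0 < ((Ik r p).image ⇑π ∩ A).card := by
      rw [card_pos]
      refine ⟨π p, mem_inter.2 ⟨mem_image_of_mem _ (self_mem_Ik (by omega) p), ?_⟩⟩
      rw [← harcA]
      exact mem_image_of_mem _ (by rw [mem_Ik_nat (by omega)]; omega)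
    have hcardle : ((Ik r p).image ⇑π ∩ A).card ≤ m - 1 := by
      rw [hZA]
      calc (((Ik r p ∩ Ik r ((β : ℕ) : ZMod n))).image ⇑π).card
          ≤ (Ik r p ∩ Ik r ((β : ℕ) : ZMod n)).card := card_image_le
        _ ≤ ((range (β + r - p.val)).image
              (fun j : ℕ => (((p.val + j : ℕ)) : ZMod n))).card := card_le_card hsub
        _ ≤ (range (β + r - p.val)).card := card_image_le
        _ = β + r - p.val := card_range _
        _ ≤ m - 1 := by omega
    exact ⟨(Ik r p).image ⇑π, A, ((Ik r p).image ⇑π ∩ A).card, hZmem, hA, rfl,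
      by omega, by omega⟩
  · -- p.val = β + r - m : the special arc gives intersection exactly 1 with B
    have hpval : p.val = β + r - m := by omega
    have hZ : J1 ∪ ((A \ B) ∪ {b₁}) ∈ 𝒜 := by
      rw [← harcZ]
      exact (hp _).2 (by rw [mem_Ik_nat (by omega)]; omega)
    refine ⟨_, B, 1, hZ, hB, ?_, le_refl 1, by omega⟩
    have : (J1 ∪ ((A \ B) ∪ {b₁})) ∩ B = {b₁} := by
      ext y
      simp only [mem_inter, mem_union, mem_singleton, mem_sdiff]
      constructor
      · rintro ⟨h1 | h2 | rfl, hyB⟩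
        · exact absurd hyB (hJ12 y h1).2
        · exact absurd hyB h2.2
        · rfl
      · rintro rfl
        exact ⟨Or.inr (Or.inr rfl), (mem_inter.1 hb₁).2⟩
    rw [this, card_singleton]

/-- there is a pair in `𝒜` meeting in exactly one point. -/
lemma exists_pair_one (hr : 2 * r < n) (hr2 : 2 ≤ r)
    (hcard : ∀ A ∈ 𝒜, A.card = r)
    (hint : ∀ A ∈ 𝒜, ∀ B ∈ 𝒜, (A ∩ B).Nonempty)
    (hmax : 𝒜.card = (n - 1).choose (r - 1)) :
    ∃ A B, A ∈ 𝒜 ∧ B ∈ 𝒜 ∧ (A ∩ B).card = 1 := by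
  classical
  obtain ⟨A₀, hA₀⟩ : 𝒜.Nonempty := by
    rw [← card_pos, hmax]
    exact Nat.choose_pos (by omega)
  suffices H : ∀ m, 1 ≤ m → ∀ A B, A ∈ 𝒜 → B ∈ 𝒜 → (A ∩ B).card = m →
      ∃ A' B', A' ∈ 𝒜 ∧ B' ∈ 𝒜 ∧ (A' ∩ B').card = 1 by
    refine H r (by omega) A₀ A₀ hA₀ hA₀ ?_
    rw [inter_self]
    exact hcard A₀ hA₀
  intro m
  induction m using Nat.strong_induction_on with
  | _ m ih =>
    intro hm1 A B hA hB hm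
    rcases Nat.lt_or_ge m 2 with h2 | h2
    · exact ⟨A, B, hA, hB, by omega⟩
    · obtain ⟨A', B', m', hA', hB', hm', h1', hlt'⟩ :=
        pair_descent hr hr2 hcard hint hmax hA hB hm h2
      exact ih m' hlt' h1' A' B' hA' hB' hm'

/-- covering lemma: any `r-1`-set avoiding `x` can be swallowed. -/
lemma cover (hr : 2 * r < n) (hr2 : 2 ≤ r)
    (hcard : ∀ A ∈ 𝒜, A.card = r)
    (hint : ∀ A ∈ 𝒜, ∀ B ∈ 𝒜, (A ∩ B).Nonempty)
    (hmax : 𝒜.card = (n - 1).choose (r - 1)) {x : Fin n} :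
    ∀ k (E : Finset (Fin n)), E.card = r - 1 → x ∉ E →
      ∀ U V, U ∈ 𝒜 → V ∈ 𝒜 → U ∩ V = {x} → (E \ (U ∪ V)).card ≤ k →
      insert x E ∈ 𝒜 := by
  intro k
  induction k with
  | zero =>
    intro E hEc hxE U V hU hV hUV hcov
    have hsub : E ⊆ (U ∪ V).erase x := by
      intro y hy
      rw [mem_erase]
      refine ⟨fun h => hxE (h ▸ hy), ?_⟩
      by_contra hc
      have : y ∈ E \ (U ∪ V) := mem_sdiff.2 ⟨hy, hc⟩
      rw [Finset.card_eq_zero.1 (Nat.le_zero.1 hcov)] at this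
      exact absurd this (notMem_empty y)
    exact F1 hr hr2 hcard hint hmax hU hV hUV hsub hEc
  | succ k ihk =>
    intro E hEc hxE U V hU hV hUV hcov
    rcases (E \ (U ∪ V)).eq_empty_or_nonempty with hemp | ⟨w, hw⟩
    · have hsub : E ⊆ (U ∪ V).erase x := by
        intro y hy
        rw [mem_erase]
        refine ⟨fun h => hxE (h ▸ hy), ?_⟩
        by_contra hc
        have : y ∈ E \ (U ∪ V) := mem_sdiff.2 ⟨hy, hc⟩
        rw [hemp] at this
        exact absurd this (notMem_empty y)
      exact F1 hr hr2 hcard hint hmax hU hV hUV hsub hEc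
    · rw [mem_sdiff] at hw
      obtain ⟨hwE, hwUV⟩ := hw
      obtain ⟨S₀, hS₀sub, hS₀c, hwS₀, hWmem⟩ :=
        Wlem hr hr2 hcard hint hmax hU hV hUV hwUV
      have hxUV : x ∈ U ∩ V := by rw [hUV]; exact mem_singleton_self x
      have hxU : x ∈ U := (mem_inter.1 hxUV).1
      have huvc : (U ∪ V).card = 2 * r - 1 := by
        have h1 := Finset.card_union_add_card_inter U V
        rw [hUV, card_singleton, hcard U hU, hcard V hV] at h1
        omega
      have hec : ((U ∪ V).erase x).card = 2 * r - 2 := by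
        rw [card_erase_of_mem (mem_union.2 (Or.inl hxU)), huvc]
        omega
      have hbigc : (((U ∪ V).erase x) \ S₀).card = r := by
        rw [card_sdiff_of_subset hS₀sub, hec, hS₀c]
        omega
      -- pick e outside E
      have : ¬ ((U ∪ V).erase x) \ S₀ ⊆ E := by
        intro hsub
        have := card_le_card hsub
        rw [hbigc, hEc] at this
        omega
      obtain ⟨e, heBig, heE⟩ := Finset.not_subset.1 this
      set S' := (((U ∪ V).erase x) \ S₀).erase e with hS'def
      have hS'c : S'.card = r - 1 := by
        rw [hS'def, card_erase_of_mem heBig, hbigc]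
      have hS'sub : S' ⊆ (U ∪ V).erase x := subset_trans (erase_subset _ _) sdiff_subset
      have hV' : insert x S' ∈ 𝒜 := F1 hr hr2 hcard hint hmax hU hV hUV hS'sub hS'c
      set W := insert x (insert w S₀) with hWdef
      set V' := insert x S' with hV'def
      have hxw : w ≠ x := fun h => hwUV (h ▸ mem_union.2 (Or.inl hxU))
      have hWV' : W ∩ V' = {x} := by
        ext y
        rw [mem_inter, hWdef, hV'def, mem_insert, mem_insert, mem_insert, mem_singleton]
        constructor
        · rintro ⟨h1, h2⟩
          rcases h1 with rfl | rfl | h1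
          · rfl
          · rcases h2 with h2 | h2
            · exact h2
            · exact absurd (mem_of_mem_erase (hS'sub h2)) hwUV
          · rcases h2 with h2 | h2
            · exact h2
            · exfalso
              rw [hS'def, mem_erase, mem_sdiff] at h2
              exact h2.2.2 h1
        · rintro rfl
          exact ⟨Or.inl rfl, Or.inl rfl⟩
      have hcov' : (E \ (W ∪ V')).card ≤ k := by
        have hsub2 : E \ (W ∪ V') ⊆ (E \ (U ∪ V)).erase w := by
          intro y hy
          rw [mem_sdiff, mem_union] at hy
          obtain ⟨hyE, hyn⟩ := hy
          push_neg at hyn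
          rw [mem_erase, mem_sdiff]
          refine ⟨?_, hyE, ?_⟩
          · intro h
            exact hyn.1 (h ▸ (by rw [hWdef]; exact mem_insert.2 (Or.inr (mem_insert_self w S₀))))
          · intro hyUV
            have hyx : y ≠ x := fun h => hyn.1 (h ▸ (by rw [hWdef]; exact mem_insert_self x _))
            have hye : y ≠ e := fun h => heE (h ▸ hyE)
            have hyer : y ∈ (U ∪ V).erase x := mem_erase.2 ⟨hyx, hyUV⟩
            by_cases hyS₀ : y ∈ S₀
            · exact hyn.1 (by rw [hWdef]; exact mem_insert.2 (Or.inr (mem_insert.2 (Or.inr hyS₀))))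
            · refine hyn.2 (by
                rw [hV'def]
                refine mem_insert.2 (Or.inr ?_)
                rw [hS'def, mem_erase, mem_sdiff]
                exact ⟨hye, hyer, hyS₀⟩)
        have hwin : w ∈ E \ (U ∪ V) := mem_sdiff.2 ⟨hwE, hwUV⟩
        calc (E \ (W ∪ V')).card ≤ ((E \ (U ∪ V)).erase w).card := card_le_card hsub2
          _ = (E \ (U ∪ V)).card - 1 := card_erase_of_mem hwin
          _ ≤ k := by omega
      exact ihk E hEc hxE W V' hWmem hV' hWV' hcov'

/-- the heart of the theorem: some `x` lies in a star contained in `𝒜`. -/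
lemma star_sub (hr : 2 * r < n) (hr2 : 2 ≤ r)
    (hcard : ∀ A ∈ 𝒜, A.card = r)
    (hint : ∀ A ∈ 𝒜, ∀ B ∈ 𝒜, (A ∩ B).Nonempty)
    (hmax : 𝒜.card = (n - 1).choose (r - 1)) :
    ∃ x : Fin n, ∀ D : Finset (Fin n), D.card = r → x ∈ D → D ∈ 𝒜 := by
  obtain ⟨A, B, hA, hB, hAB⟩ := exists_pair_one hr hr2 hcard hint hmax
  obtain ⟨x, hx⟩ := Finset.card_eq_one.1 hAB
  refine ⟨x, fun D hDc hxD => ?_⟩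
  have h := cover hr hr2 hcard hint hmax ((D.erase x) \ (A ∪ B)).card (D.erase x)
    (by rw [card_erase_of_mem hxD, hDc]) (notMem_erase x D) A B hA hB hx (le_refl _)
  rwa [insert_erase hxD] at h

end apps

end EKRU

/-- **Erdős–Ko–Rado theorem (uniqueness).** -/
theorem ekr_uniqueness' (n r : ℕ) (hr : 2 * r < n) (𝒜 : Finset (Finset (Fin n)))
    (hcard : ∀ A ∈ 𝒜, A.card = r)
    (hint : ∀ A ∈ 𝒜, ∀ B ∈ 𝒜, (A ∩ B).Nonempty)
    (hmax : 𝒜.card = (n - 1).choose (r - 1)) :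
    ∃ x : Fin n, ∀ A : Finset (Fin n), A ∈ 𝒜 ↔ (A.card = r ∧ x ∈ A) := by
  classical
  haveI : NeZero n := ⟨by omega⟩
  have hApos : 𝒜.Nonempty := by
    rw [← Finset.card_pos, hmax]
    exact Nat.choose_pos (by omega)
  rcases Nat.lt_or_ge r 1 with hr0 | hr1
  · -- r = 0 : impossible
    exfalso
    obtain ⟨A, hA⟩ := hApos
    have hc := hcard A hA
    have : A = ∅ := Finset.card_eq_zero.1 (by omega)
    obtain ⟨y, hy⟩ := hint A hA A hA
    rw [this] at hy
    simp at hy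
  rcases Nat.lt_or_ge r 2 with hr1' | hr2
  · -- r = 1
    have hre : r = 1 := by omega
    subst hre
    obtain ⟨A, hA⟩ := hApos
    obtain ⟨x, hx⟩ := Finset.card_eq_one.1 (hcard A hA)
    have h𝒜card : 𝒜.card = 1 := by
      rw [hmax]
      simp
    have h𝒜 : 𝒜 = {A} := by
      rw [Finset.card_eq_one] at h𝒜card
      obtain ⟨C, hC⟩ := h𝒜card
      rw [hC] at hA ⊢
      rw [Finset.mem_singleton] at hA
      rw [hA]
    refine ⟨x, fun C => ?_⟩
    rw [h𝒜, Finset.mem_singleton]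
    constructor
    · intro hCA
      subst hCA
      exact ⟨hcard C (by rw [h𝒜]; exact Finset.mem_singleton_self C),
        by rw [hx]; exact Finset.mem_singleton_self x⟩
    · rintro ⟨hCc, hxC⟩
      obtain ⟨y, hy⟩ := Finset.card_eq_one.1 hCc
      rw [hy] at hxC ⊢
      rw [Finset.mem_singleton] at hxC
      rw [← hxC, hx]
  · -- main case r ≥ 2
    obtain ⟨x, hx⟩ := EKRU.star_sub hr hr2 hcard hint hmax
    set star := Finset.univ.filter
      (fun A : Finset (Fin n) => A.card = r ∧ x ∈ A) with hstardef
    have hsub : star ⊆ 𝒜 := by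
      intro D hD
      rw [hstardef, Finset.mem_filter] at hD
      exact hx D hD.2.1 hD.2.2
    have hstarc : star.card = (n - 1).choose (r - 1) := by
      have hbij : star.card = ((Finset.univ.erase x).powersetCard (r - 1)).card := by
        apply Finset.card_bij' (fun A _ => A.erase x) (fun S _ => insert x S)
        · intro A hA
          have hxA : x ∈ A := by
            first
            | exact ((Finset.mem_filter.1 hA).2).2
            | exact hA.2.2
          exact Finset.insert_erase hxA
        · intro S hS
          have hS' : S ⊆ Finset.univ.erase x := by
            first
            | exact (Finset.mem_powersetCard.1 hS).1
            | exact hS.1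
          exact Finset.erase_insert (fun h => (Finset.mem_erase.1 (hS' h)).1 rfl)
        · intro A hA
          have hA' : A.card = r ∧ x ∈ A := by
            first
            | exact (Finset.mem_filter.1 hA).2
            | exact hA.2
          rw [Finset.mem_powersetCard]
          constructor
          · intro y hy
            rw [Finset.mem_erase] at hy ⊢
            exact ⟨hy.1, Finset.mem_univ y⟩
          · rw [Finset.card_erase_of_mem hA'.2, hA'.1]
        · intro S hS
          have hS' : S ⊆ Finset.univ.erase x ∧ S.card = r - 1 := by
            first
            | exact Finset.mem_powersetCard.1 hS
            | exact hS
          have hxS : x ∉ S := fun h => (Finset.mem_erase.1 (hS'.1 h)).1 rfl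
          rw [hstardef, Finset.mem_filter]
          refine ⟨Finset.mem_univ _, ?_, Finset.mem_insert_self x S⟩
          rw [Finset.card_insert_of_notMem hxS, hS'.2]
          omega
      rw [hbij, Finset.card_powersetCard, Finset.card_erase_of_mem (Finset.mem_univ x),
        Finset.card_univ, Fintype.card_fin]
    have heq : star = 𝒜 := Finset.eq_of_subset_of_card_le hsub (by rw [hmax, hstarc])
    refine ⟨x, fun A => ?_⟩
    rw [← heq, hstardef, Finset.mem_filter]
    simp

/-- **Erdős–Ko–Rado theorem (uniqueness).** If `r < n/2` and `𝒜` is a pairwise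
intersecting family of `r`-element subsets of an `n`-element set with
`|𝒜| = C(n-1, r-1)`, then `𝒜` is the family of all `r`-element subsets
containing some fixed element `x`. -/
theorem ekr_uniqueness (n r : ℕ) (hr : 2 * r < n) (𝒜 : Finset (Finset (Fin n)))
    (hcard : ∀ A ∈ 𝒜, A.card = r)
    (hint : ∀ A ∈ 𝒜, ∀ B ∈ 𝒜, (A ∩ B).Nonempty)
    (hmax : 𝒜.card = (n - 1).choose (r - 1)) :
    ∃ x : Fin n, ∀ A : Finset (Fin n), A ∈ 𝒜 ↔ (A.card = r ∧ x ∈ A) :=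
  ekr_uniqueness' n r hr 𝒜 hcard hint hmax
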